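/- Let H be a hb-graph on Fin n with hb-edges e_1, …, e_p of m-cardinalities ρ_k satisfying 1 ≤ ρ_k ≤ r, where r ≥ 2 is the m-range of H, and let A_str be the e-adjacency hypermatrix of its straightforward m-uniformized hb-graph with single null vertex N_1. Then for every j with 1 ≤ j ≤ r−1, the sum of the entries of A_str over all tuples t whose first coordinate is N_1 and such that exactly r − j − 1 of the remaining r − 1 coordinates equal N_1 is (r − j) · |{k : ρ_k = j}|; hence |{k : ρ_k = j}| is retrieved by dividing this sum by r − j. -/

import Mathlib

/-- The hb-edges of the straightforward m-uniformized hb-graph: the original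
multiplicities on the original vertices `Sum.inl i`, and multiplicity `r − ρ_k`
on the single null vertex `N_1 = Sum.inr ()`, where `ρ_k = Σ_j e_k(j)` is the
m-cardinality of the hb-edge. -/
def strEdge (n p r : ℕ) (e : Fin p → Fin n → ℕ) (k : Fin p) :
    Fin n ⊕ Unit → ℕ
  | Sum.inl i => e k i
  | Sum.inr _ => r - ∑ j, e k j

/-- The e-adjacency hypermatrix of the straightforward m-uniformized hb-graph:
`A_str(t) = Σ_k (∏_v ê_k(v)!)/(r−1)! · [t realizes ê_k]`. -/
noncomputable def Astr (n p r : ℕ) (e : Fin p → Fin n → ℕ)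
    (t : Fin r → Fin n ⊕ Unit) : ℝ :=
  ∑ k, if ∀ v, (Finset.univ.filter (fun s => t s = v)).card = strEdge n p r e k v
       then ((∏ v, (strEdge n p r e k v).factorial : ℕ) : ℝ) / (r - 1).factorial
       else 0

open Finset

lemma fiber_succ {V : Type*} [DecidableEq V] {r : ℕ} (t : Fin (r+1) → V) (w : V) :
    (univ.filter (fun s => t s = w)).card
      = (if t 0 = w then 1 else 0) + (univ.filter (fun s : Fin r => t s.succ = w)).card := by
  rw [Finset.card_filter, Finset.card_filter, Fin.sum_univ_succ]

lemma card_fixed_eq {V : Type*} [Fintype V] [DecidableEq V] (r : ℕ) (f : V → ℕ) (v : V)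
    (hv : 1 ≤ f v) :
    ((univ.filter (fun t : Fin (r+1) → V =>
        (∀ w, (univ.filter (fun s => t s = w)).card = f w) ∧ t 0 = v)).card)
    = ((univ.filter (fun t' : Fin r → V =>
        ∀ w, (univ.filter (fun s => t' s = w)).card = Function.update f v (f v - 1) w)).card) := by
  apply Finset.card_nbij' (fun t => t ∘ Fin.succ) (fun t' => Fin.cases v t')
  · intro t ht
    simp only [mem_coe, mem_filter, mem_univ, true_and] at ht ⊢
    obtain ⟨ht, h0⟩ := ht
    intro w
    have h1 := fiber_succ t w
    rw [ht w] at h1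
    have h2 : (univ.filter (fun s : Fin r => (t ∘ Fin.succ) s = w)).card
        = (univ.filter (fun s : Fin r => t s.succ = w)).card := rfl
    rw [h2]
    by_cases hw : w = v
    · subst hw
      rw [h0, if_pos rfl] at h1
      rw [Function.update_self]
      omega
    · rw [Function.update_of_ne hw]
      rw [h0, if_neg (Ne.symm hw)] at h1
      omega
  · intro t' ht'
    simp only [mem_coe, mem_filter, mem_univ, true_and] at ht' ⊢
    refine ⟨fun w => ?_, by simp⟩
    have h1 := fiber_succ (Fin.cases v t' : Fin (r+1) → V) w
    replace h1 : (univ.filter (fun s => (Fin.cases v t' : Fin (r+1) → V) s = w)).card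
        = (if v = w then 1 else 0) + (univ.filter (fun s => t' s = w)).card := h1
    rw [h1, ht' w]
    by_cases hw : w = v
    · subst hw
      rw [Function.update_self, if_pos rfl]
      omega
    · rw [Function.update_of_ne hw, if_neg (Ne.symm hw)]
      omega
  · intro t ht
    simp only [mem_coe, mem_filter, mem_univ, true_and] at ht
    funext s
    cases s using Fin.cases with
    | zero => simp [ht.2]
    | succ s => simp [Function.comp]
  · intro t' _
    funext s
    simp [Function.comp]

lemma count_mul_fact {V : Type*} [Fintype V] [DecidableEq V] :
    ∀ (r : ℕ) (f : V → ℕ), ∑ v, f v = r →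
    (∏ v, (f v).factorial) *
      (univ.filter (fun t : Fin r → V => ∀ v,
        (univ.filter (fun s => t s = v)).card = f v)).card = r.factorial := by
  intro r
  induction r with
  | zero =>
    intro f hf
    have hf0 : ∀ v, f v = 0 := fun v =>
      (Finset.sum_eq_zero_iff.mp hf) v (mem_univ v)
    have h1 : (univ.filter (fun t : Fin 0 → V => ∀ v,
        (univ.filter (fun s => t s = v)).card = f v)) = univ := by
      apply Finset.filter_true_of_mem
      intro t _ v
      simp [hf0 v, Finset.filter_eq_empty_iff]
    rw [h1]
    simp [hf0, Finset.card_univ]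
  | succ r ih =>
    intro f hf
    have hcard : (univ.filter (fun t : Fin (r+1) → V => ∀ v,
        (univ.filter (fun s => t s = v)).card = f v)).card
        = ∑ v, ((univ.filter (fun t : Fin (r+1) → V =>
            (∀ w, (univ.filter (fun s => t s = w)).card = f w) ∧ t 0 = v)).card) := by
      rw [Finset.card_eq_sum_card_fiberwise (f := fun t : Fin (r+1) → V => t 0)
        (t := univ) (fun t _ => mem_univ (t 0))]
      apply Finset.sum_congr rfl
      intro v _
      congr 1
      ext t
      simp only [Finset.mem_filter, mem_univ, true_and]
    have key : ∀ v : V, (∏ w, (f w).factorial) *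
        ((univ.filter (fun t : Fin (r+1) → V =>
          (∀ w, (univ.filter (fun s => t s = w)).card = f w) ∧ t 0 = v)).card)
        = f v * r.factorial := by
      intro v
      clear hcard
      by_cases hv : f v = 0
      · have hempty : (univ.filter (fun t : Fin (r+1) → V =>
            (∀ w, (univ.filter (fun s => t s = w)).card = f w) ∧ t 0 = v)) = ∅ := by
          rw [Finset.filter_eq_empty_iff]
          rintro t - ⟨ht, h0⟩
          have h1 := ht v
          rw [hv] at h1
          have h2 : (0 : Fin (r+1)) ∈ univ.filter (fun s => t s = v) := by
            simp [h0]
          rw [Finset.card_eq_zero.mp h1] at h2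
          exact absurd h2 (Finset.notMem_empty _)
        rw [hempty]
        simp [hv]
      · have hv1 : 1 ≤ f v := Nat.one_le_iff_ne_zero.mpr hv
        rw [card_fixed_eq r f v hv1]
        obtain ⟨f', hf'⟩ : ∃ f', f' = Function.update f v (f v - 1) := ⟨_, rfl⟩
        rw [← hf']
        have hsum' : ∑ w, f' w = r := by
          rw [hf', Finset.sum_update_of_mem (mem_univ v)]
          have h1 : f v + ∑ w ∈ univ.erase v, f w = r + 1 := by
            rw [Finset.add_sum_erase _ f (mem_univ v)]; exact hf
          rw [Finset.sdiff_singleton_eq_erase]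
          omega
        have hprod : (∏ w, (f w).factorial) = f v * ∏ w, (f' w).factorial := by
          rw [← Finset.mul_prod_erase univ _ (mem_univ v),
              ← Finset.mul_prod_erase univ (fun w => (f' w).factorial) (mem_univ v)]
          have h2 : ∏ w ∈ univ.erase v, (f' w).factorial
              = ∏ w ∈ univ.erase v, (f w).factorial := by
            apply Finset.prod_congr rfl
            intro w hw
            rw [hf', Function.update_of_ne (Finset.mem_erase.mp hw).1]
          rw [h2, hf', Function.update_self, ← mul_assoc,
            Nat.mul_factorial_pred (by omega)]
        rw [hprod, mul_assoc, ih f' hsum']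
    rw [hcard, Finset.mul_sum]
    trans (∑ v, f v * r.factorial)
    · exact Finset.sum_congr rfl fun v _ => key v
    · rw [← Finset.sum_mul, hf, Nat.factorial_succ]

lemma count_fixed {V : Type*} [Fintype V] [DecidableEq V] (r : ℕ) (f : V → ℕ) (v : V)
    (hf : ∑ w, f w = r + 1) (hv : 1 ≤ f v) :
    (∏ w, (f w).factorial) *
      ((univ.filter (fun t : Fin (r+1) → V =>
        (∀ w, (univ.filter (fun s => t s = w)).card = f w) ∧ t 0 = v)).card)
    = f v * r.factorial := by
  rw [card_fixed_eq r f v hv]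
  obtain ⟨f', hf'⟩ : ∃ f', f' = Function.update f v (f v - 1) := ⟨_, rfl⟩
  rw [← hf']
  have hsum' : ∑ w, f' w = r := by
    rw [hf', Finset.sum_update_of_mem (mem_univ v)]
    have h1 : f v + ∑ w ∈ univ.erase v, f w = r + 1 := by
      rw [Finset.add_sum_erase _ f (mem_univ v)]; exact hf
    rw [Finset.sdiff_singleton_eq_erase]
    omega
  have hprod : (∏ w, (f w).factorial) = f v * ∏ w, (f' w).factorial := by
    rw [← Finset.mul_prod_erase univ _ (mem_univ v),
        ← Finset.mul_prod_erase univ (fun w => (f' w).factorial) (mem_univ v)]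
    have h2 : ∏ w ∈ univ.erase v, (f' w).factorial
        = ∏ w ∈ univ.erase v, (f w).factorial := by
      apply Finset.prod_congr rfl
      intro w hw
      rw [hf', Function.update_of_ne (Finset.mem_erase.mp hw).1]
    rw [h2, hf', Function.update_self, ← mul_assoc,
      Nat.mul_factorial_pred (by omega)]
  rw [hprod, mul_assoc, count_mul_fact r f' hsum']

lemma card_succ_split {V : Type} [DecidableEq V] {r : ℕ} (t : Fin (r+1) → V) (w : V)
    (h0 : t 0 = w) :
    (univ.filter (fun s => t s = w)).card
      = (univ.filter (fun s => s ≠ (0 : Fin (r+1)) ∧ t s = w)).card + 1 := by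
  have h : univ.filter (fun s => t s = w)
      = insert (0 : Fin (r+1)) (univ.filter (fun s => s ≠ (0 : Fin (r+1)) ∧ t s = w)) := by
    ext s
    simp only [mem_filter, mem_univ, true_and, mem_insert]
    constructor
    · intro h; by_cases hs : s = 0
      · exact Or.inl hs
      · exact Or.inr ⟨hs, h⟩
    · rintro (rfl | ⟨-, h⟩)
      · exact h0
      · exact h
  rw [h, Finset.card_insert_of_notMem (by simp)]

lemma arith1 (r' q a : ℕ) (hq2 : q ≤ r') (ha : a ≤ r' + 1)
    (h : r' + 1 - a = r' + 1 - q - 1 + 1) : a = q := by omega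

lemma arith2 (r' q a b : ℕ) (hq2 : q ≤ r') (h1 : a = r' + 1 - q) (h3 : a = b + 1) :
    b = r' + 1 - q - 1 := by omega

/-- For a hb-graph on `Fin n` with hb-edges of m-cardinalities `ρ_k` satisfying
`1 ≤ ρ_k ≤ r`, where `r ≥ 2` is the m-range: for every `q` with `1 ≤ q ≤ r−1`,
the sum of the entries of the straightforward e-adjacency hypermatrix over all
tuples whose first coordinate is the null vertex `N_1` and such that exactly
`r − q − 1` of the remaining `r − 1` coordinates equal `N_1` is
`(r − q) · |{k : ρ_k = q}|`; hence `|{k : ρ_k = q}|` is retrieved by dividing this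
sum by `r − q`. -/
theorem stmt12 (n p r : ℕ) (hr : 2 ≤ r) (e : Fin p → Fin n → ℕ)
    (hlo : ∀ k, 1 ≤ ∑ j, e k j) (hub : ∀ k, ∑ j, e k j ≤ r)
    (hrange : Finset.univ.sup (fun k : Fin p => ∑ j, e k j) = r) :
    ∀ q : ℕ, 1 ≤ q → q ≤ r - 1 →
      (∑ t ∈ Finset.univ.filter
          (fun t : Fin r → Fin n ⊕ Unit =>
            t ⟨0, by omega⟩ = Sum.inr () ∧
            (Finset.univ.filter
              (fun s : Fin r => s ≠ ⟨0, by omega⟩ ∧ t s = Sum.inr ())).card = r - q - 1),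
        Astr n p r e t)
        = (((r - q) *
            (Finset.univ.filter (fun k : Fin p => ∑ j, e k j = q)).card : ℕ) : ℝ) ∧
      ((Finset.univ.filter (fun k : Fin p => ∑ j, e k j = q)).card : ℝ)
        = (∑ t ∈ Finset.univ.filter
              (fun t : Fin r → Fin n ⊕ Unit =>
                t ⟨0, by omega⟩ = Sum.inr () ∧
                (Finset.univ.filter
                  (fun s : Fin r => s ≠ ⟨0, by omega⟩ ∧ t s = Sum.inr ())).card = r - q - 1),
            Astr n p r e t) / ((r - q : ℕ) : ℝ) := by
  obtain ⟨r', rfl⟩ : ∃ r', r = r' + 1 := ⟨r - 1, by omega⟩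
  intro q hq1 hq2
  simp only [Fin.zero_eta]
  have hq2' : q ≤ r' := by omega
  have hsumE : ∀ k, ∑ v, strEdge n p (r' + 1) e k v = r' + 1 := by
    intro k
    rw [Fintype.sum_sum_type]
    simp only [strEdge]
    have := hub k
    simp only [Finset.univ_unique, Finset.sum_singleton]
    omega
  have key : (∑ t ∈ Finset.univ.filter
          (fun t : Fin (r' + 1) → Fin n ⊕ Unit =>
            t 0 = Sum.inr () ∧
            (Finset.univ.filter
              (fun s : Fin (r' + 1) => s ≠ 0 ∧ t s = Sum.inr ())).card
              = r' + 1 - q - 1),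
        Astr n p (r' + 1) e t)
        = (((r' + 1 - q) *
            (Finset.univ.filter (fun k : Fin p => ∑ j, e k j = q)).card : ℕ) : ℝ) := by
    unfold Astr
    rw [Finset.sum_comm]
    have hterm : ∀ k : Fin p,
        (∑ t ∈ Finset.univ.filter
          (fun t : Fin (r' + 1) → Fin n ⊕ Unit =>
            t 0 = Sum.inr () ∧
            (Finset.univ.filter
              (fun s : Fin (r' + 1) => s ≠ 0 ∧ t s = Sum.inr ())).card = r' + 1 - q - 1),
          if ∀ v, (Finset.univ.filter (fun s => t s = v)).card = strEdge n p (r' + 1) e k v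
          then ((∏ v, (strEdge n p (r' + 1) e k v).factorial : ℕ) : ℝ) / (r' + 1 - 1).factorial
          else 0)
        = if ∑ j, e k j = q then ((r' + 1 - q : ℕ) : ℝ) else 0 := by
      intro k
      have h2 : strEdge n p (r' + 1) e k (Sum.inr ()) = r' + 1 - ∑ j, e k j := rfl
      rw [← Finset.sum_filter, Finset.filter_filter, Finset.sum_const, nsmul_eq_mul]
      by_cases hk : ∑ j, e k j = q
      · rw [if_pos hk]
        have hv1 : 1 ≤ strEdge n p (r' + 1) e k (Sum.inr ()) := by
          rw [h2, hk]; omega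
        have hset : (Finset.univ.filter
            (fun t : Fin (r' + 1) → Fin n ⊕ Unit =>
              (t 0 = Sum.inr () ∧
                (Finset.univ.filter
                  (fun s : Fin (r' + 1) => s ≠ 0 ∧ t s = Sum.inr ())).card = r' + 1 - q - 1) ∧
              ∀ v, (Finset.univ.filter (fun s => t s = v)).card = strEdge n p (r' + 1) e k v))
            = (Finset.univ.filter
            (fun t : Fin (r' + 1) → Fin n ⊕ Unit =>
              (∀ w, (Finset.univ.filter (fun s => t s = w)).card = strEdge n p (r' + 1) e k w) ∧
              t 0 = Sum.inr ())) := by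
          ext t
          simp only [mem_filter, mem_univ, true_and]
          constructor
          · rintro ⟨⟨h0, -⟩, hreal⟩
            exact ⟨hreal, h0⟩
          · rintro ⟨hreal, h0⟩
            refine ⟨⟨h0, ?_⟩, hreal⟩
            have h1 := hreal (Sum.inr ())
            rw [h2, hk] at h1
            exact arith2 r' q _ _ hq2' h1 (card_succ_split t (Sum.inr ()) h0)
        rw [hset]
        have hcnt := count_fixed r' (strEdge n p (r' + 1) e k) (Sum.inr ()) (hsumE k) hv1
        rw [h2, hk] at hcnt
        have hfact : ((r'.factorial : ℕ) : ℝ) ≠ 0 :=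
          Nat.cast_ne_zero.mpr r'.factorial_ne_zero
        rw [Nat.add_sub_cancel, ← mul_div_assoc, div_eq_iff hfact, mul_comm]
        exact_mod_cast hcnt
      · rw [if_neg hk]
        have hset : (Finset.univ.filter
            (fun t : Fin (r' + 1) → Fin n ⊕ Unit =>
              (t 0 = Sum.inr () ∧
                (Finset.univ.filter
                  (fun s : Fin (r' + 1) => s ≠ 0 ∧ t s = Sum.inr ())).card = r' + 1 - q - 1) ∧
              ∀ v, (Finset.univ.filter (fun s => t s = v)).card = strEdge n p (r' + 1) e k v))
            = ∅ := by
          rw [Finset.filter_eq_empty_iff]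
          rintro t - ⟨⟨h0, hcnt⟩, hreal⟩
          have h1 := hreal (Sum.inr ())
          rw [h2] at h1
          apply hk
          refine arith1 r' q _ hq2' (hub k) ?_
          rw [← h1, card_succ_split t (Sum.inr ()) h0, hcnt]
        rw [hset]
        simp
    calc (∑ k, ∑ t ∈ Finset.univ.filter
          (fun t : Fin (r' + 1) → Fin n ⊕ Unit =>
            t 0 = Sum.inr () ∧
            (Finset.univ.filter
              (fun s : Fin (r' + 1) => s ≠ 0 ∧ t s = Sum.inr ())).card = r' + 1 - q - 1),
          if ∀ v, (Finset.univ.filter (fun s => t s = v)).card = strEdge n p (r' + 1) e k v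
          then ((∏ v, (strEdge n p (r' + 1) e k v).factorial : ℕ) : ℝ) / (r' + 1 - 1).factorial
          else 0)
        = ∑ k, if ∑ j, e k j = q then ((r' + 1 - q : ℕ) : ℝ) else 0 :=
          Finset.sum_congr rfl fun k _ => hterm k
      _ = ∑ k ∈ Finset.univ.filter (fun k : Fin p => ∑ j, e k j = q),
            ((r' + 1 - q : ℕ) : ℝ) := (Finset.sum_filter _ _).symm
      _ = (((r' + 1 - q) *
            (Finset.univ.filter (fun k : Fin p => ∑ j, e k j = q)).card : ℕ) : ℝ) := by
          rw [Finset.sum_const, nsmul_eq_mul, Nat.cast_mul]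
          ring
  refine ⟨key, ?_⟩
  refine Eq.trans ?_ (congrArg (fun x => x / ((r' + 1 - q : ℕ) : ℝ)) key).symm
  have hne : (((r' + 1 - q : ℕ) : ℝ)) ≠ 0 := by
    have h1 : 1 ≤ r' + 1 - q := by omega
    exact_mod_cast Nat.one_le_iff_ne_zero.mp h1
  rw [Nat.cast_mul, mul_comm, mul_div_assoc, div_self hne, mul_one]
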